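/- Let a, b be an orthonormal pair in R³, S a symmetric 3×3 matrix, and define α = ⟨a, S a⟩⟨b,b⟩ + ⟨b, S b⟩⟨a,a⟩ − 2⟨a, S b⟩⟨a,b⟩. If G(t) is the Gram matrix of (A(t)a, A(t)b) where A(t) solves A' = L(t)A with A(t₀) = 1 and symmetric part of L(t₀) equal to S, then d/dt sqrt(det G(t)) |_{t=t₀} = α = ⟨a, S a⟩ + ⟨b, S b⟩. -/

import Mathlib

open Matrix

attribute [local instance] Matrix.normedAddCommGroup Matrix.normedSpace

/-- For an orthonormal pair `a, b` in ℝ³ and the linearized flow `A' = L A`,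
`A(t₀) = 1` with `sym L(t₀) = S`, the area-stretching factor `J = √(det G)` of the
Gram matrix `G` of `(A a, A b)` satisfies
`dJ/dt |_{t₀} = α = ⟨a, Sa⟩ + ⟨b, Sb⟩`, where
`α = ⟨a,Sa⟩⟨b,b⟩ + ⟨b,Sb⟩⟨a,a⟩ − 2⟨a,Sb⟩⟨a,b⟩`. -/
theorem area_stretch_rate
    (t₀ : ℝ) (a b : Fin 3 → ℝ)
    (ha : a ⬝ᵥ a = 1) (hb : b ⬝ᵥ b = 1) (hab : a ⬝ᵥ b = 0)
    (S : Matrix (Fin 3) (Fin 3) ℝ) (hSsym : Sᵀ = S)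
    (A L : ℝ → Matrix (Fin 3) (Fin 3) ℝ)
    (hA : ∀ t, HasDerivAt A (L t * A t) t) (hA0 : A t₀ = 1)
    (hL : (1 / 2 : ℝ) • (L t₀ + (L t₀)ᵀ) = S)
    (G : ℝ → Matrix (Fin 2) (Fin 2) ℝ)
    (hG : ∀ t, G t = !![(A t).mulVec a ⬝ᵥ (A t).mulVec a,
                        (A t).mulVec a ⬝ᵥ (A t).mulVec b;
                        (A t).mulVec b ⬝ᵥ (A t).mulVec a,
                        (A t).mulVec b ⬝ᵥ (A t).mulVec b])
    (α : ℝ)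
    (hα : α = (a ⬝ᵥ S.mulVec a) * (b ⬝ᵥ b) + (b ⬝ᵥ S.mulVec b) * (a ⬝ᵥ a)
            - 2 * (a ⬝ᵥ S.mulVec b) * (a ⬝ᵥ b)) :
    HasDerivAt (fun t => Real.sqrt (G t).det) α t₀ ∧
    α = a ⬝ᵥ S.mulVec a + b ⬝ᵥ S.mulVec b := by
  set D := L t₀ with hD
  -- symmetrization identity
  have hid : ∀ v w : Fin 3 → ℝ,
      D.mulVec v ⬝ᵥ w + v ⬝ᵥ D.mulVec w = 2 * (v ⬝ᵥ S.mulVec w) := by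
    intro v w
    have h1 : v ⬝ᵥ (Dᵀ *ᵥ w) = (D *ᵥ v) ⬝ᵥ w := by
      rw [Matrix.dotProduct_mulVec, Matrix.vecMul_transpose]
    rw [← hL, Matrix.smul_mulVec, dotProduct_smul, Matrix.add_mulVec,
      dotProduct_add, h1, smul_eq_mul]
    ring
  -- α simplification
  have hαval : α = a ⬝ᵥ S.mulVec a + b ⬝ᵥ S.mulVec b := by
    rw [hα, ha, hb, hab]; ring
  refine ⟨?_, hαval⟩
  -- entrywise derivatives
  have hentry : ∀ i j, HasDerivAt (fun t => A t i j) (D i j) t₀ := by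
    intro i j
    let π₁ : ((Fin 3) → (Fin 3) → ℝ) →L[ℝ] ((Fin 3) → ℝ) := ContinuousLinearMap.proj i
    let π₂ : ((Fin 3) → ℝ) →L[ℝ] ℝ := ContinuousLinearMap.proj j
    have := (π₂.comp π₁).hasFDerivAt.comp_hasDerivAt t₀ (hA t₀)
    rw [hA0, mul_one] at this
    exact this
  -- mulVec component derivatives
  have hmv : ∀ (v : Fin 3 → ℝ) (i : Fin 3),
      HasDerivAt (fun t => (A t).mulVec v i) (D.mulVec v i) t₀ := by
    intro v i
    have := HasDerivAt.fun_sum (fun j (_ : j ∈ Finset.univ) => (hentry i j).mul_const (v j))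
    simpa [Matrix.mulVec, dotProduct] using this
  -- dot product derivatives
  have hdot : ∀ v w : Fin 3 → ℝ,
      HasDerivAt (fun t => (A t).mulVec v ⬝ᵥ (A t).mulVec w)
        (D.mulVec v ⬝ᵥ w + v ⬝ᵥ D.mulVec w) t₀ := by
    intro v w
    have h := HasDerivAt.fun_sum (fun i (_ : i ∈ Finset.univ) => (hmv v i).mul (hmv w i))
    have h2 : (∑ i : Fin 3, (D.mulVec v i * (A t₀).mulVec w i
        + (A t₀).mulVec v i * D.mulVec w i))
        = D.mulVec v ⬝ᵥ w + v ⬝ᵥ D.mulVec w := by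
      simp [hA0, dotProduct, Finset.sum_add_distrib]
    rw [h2] at h
    exact h.congr_deriv rfl |>.congr_of_eventuallyEq
      (Filter.Eventually.of_forall fun t => by simp [dotProduct])
  -- the four Gram-entry derivatives
  have hpp := hdot a a
  have hss := hdot b b
  have hpq := hdot a b
  have hqp := hdot b a
  -- values at t₀
  have hval : ∀ v w : Fin 3 → ℝ, (A t₀).mulVec v ⬝ᵥ (A t₀).mulVec w = v ⬝ᵥ w := by
    intro v w; simp [hA0, Matrix.one_mulVec]
  -- derivative of det
  have hdetfun : (fun t => (G t).det)
      = fun t => ((A t).mulVec a ⬝ᵥ (A t).mulVec a) * ((A t).mulVec b ⬝ᵥ (A t).mulVec b)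
        - ((A t).mulVec a ⬝ᵥ (A t).mulVec b) * ((A t).mulVec b ⬝ᵥ (A t).mulVec a) := by
    funext t; rw [hG t, Matrix.det_fin_two_of]
  have hdet : HasDerivAt (fun t => (G t).det) (2 * α) t₀ := by
    rw [hdetfun]
    have h := (hpp.fun_mul hss).fun_sub (hpq.fun_mul hqp)
    refine h.congr_deriv ?_
    rw [hval a a, hval b b, hval a b, hval b a, ha, hb, hab,
      dotProduct_comm b a, hab, hid a a, hid b b, hαval]
    ring
  -- det at t₀ is 1
  have hdet0 : (G t₀).det = 1 := by
    rw [hG t₀, Matrix.det_fin_two_of, hval a a, hval b b, hval a b, hval b a,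
      ha, hb, hab, dotProduct_comm b a, hab]
    ring
  -- compose with sqrt
  have hsqrt : HasDerivAt Real.sqrt (1 / (2 * Real.sqrt ((G t₀).det))) ((G t₀).det) :=
    Real.hasDerivAt_sqrt (by rw [hdet0]; norm_num)
  have := hsqrt.comp t₀ hdet
  have hconv : 1 / (2 * Real.sqrt ((G t₀).det)) * (2 * α) = α := by
    rw [hdet0, Real.sqrt_one]; ring
  rw [hconv] at this
  exact this
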